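/- arXiv:2306.16690 — 2 statements merged into one kernel-verified Lean document; each statement's English description precedes it below -/
import Mathlib

section
/- Let Q be strictly convex, even, nonnegative; let A ≤ B be reals, ε > 0, and φ : J → [A,B] measurable with W(φ,J) < Q(ε). Then either 𝒞(φ,J) ≥ A + ε or V_{A+ε}(φ,J) ≤ Q(ε); and likewise either 𝒞(φ,J) ≤ B − ε or V_{B−ε}(φ,J) ≤ Q(ε). -/
open MeasureTheory Set Filter Topology
open scoped ENNReal

noncomputable section

/-- Lebesgue average of a (nonnegative-valued, via `ENNReal.ofReal`) function over `J`. -/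
def avg (J : Set ℝ) (f : ℝ → ℝ) : ℝ≥0∞ :=
  (volume J)⁻¹ * ∫⁻ x in J, ENNReal.ofReal (f x)

/-- `V_c(φ, J) = ⟨Q(φ - c)⟩_J`. -/
def Vc (Q φ : ℝ → ℝ) (J : Set ℝ) (c : ℝ) : ℝ≥0∞ :=
  avg J (fun x => Q (φ x - c))

/-- `V(φ, J) = inf_c V_c(φ, J)`. -/
def V (Q φ : ℝ → ℝ) (J : Set ℝ) : ℝ≥0∞ :=
  ⨅ c : ℝ, Vc Q φ J c

/-- `W(φ, J) = sup { V(φ, L) : L ⊆ J an interval }`. -/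
def W (Q φ : ℝ → ℝ) (J : Set ℝ) : ℝ≥0∞ :=
  ⨆ (a : ℝ) (b : ℝ) (_ : Icc a b ⊆ J), V Q φ (Icc a b)

/-- Decreasing rearrangement of `f : [0,1] → ℝ`:
`f*(t) = inf {λ : |{s ∈ [0,1] : f(s) > λ}| ≤ t}`. -/
def decRe (f : ℝ → ℝ) (t : ℝ) : ℝ :=
  sInf {l : ℝ | volume {s ∈ Icc (0:ℝ) 1 | l < f s} ≤ ENNReal.ofReal t}

/-- `𝒞(φ, J)`: the minimizer of `c ↦ V_c(φ, J)` (when it exists). -/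
def CC (Q φ : ℝ → ℝ) (J : Set ℝ) : ℝ :=
  Classical.epsilon (fun c => ∀ c', Vc Q φ J c ≤ Vc Q φ J c')

/-- `α`-concatenation of `φ₋ : [a₋,b₋] → ℝ` and `φ₊ : [a₊,b₊] → ℝ`, as a function on `[0,1]`. -/
def concat (φm φp : ℝ → ℝ) (am bm ap bp α : ℝ) : ℝ → ℝ :=
  fun s => if s < α then φm (am + (bm - am) * (s / α))
           else φp (ap + (bp - ap) * ((s - α) / (1 - α)))

namespace Stmt10Aux


variable {Q : ℝ → ℝ}

/-- secant slope monotonicity through a fixed point, on univ. -/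
lemma secant (hQ : ConvexOn ℝ univ Q) {a x y : ℝ} (hxa : x ≠ a) (hya : y ≠ a) (hxy : x ≤ y) :
    (Q x - Q a) / (x - a) ≤ (Q y - Q a) / (y - a) :=
  hQ.secant_mono trivial trivial trivial hxa hya hxy

/-- The left derivative of a convex function, as a sup of left slopes. -/
def QL (Q : ℝ → ℝ) (y : ℝ) : ℝ :=
  sSup ((fun h : ℝ => (Q y - Q (y - h)) / h) '' Ioi 0)

lemma lslope_eq (y h : ℝ) (hh : h ≠ 0) :
    (Q y - Q (y - h)) / h = (Q (y - h) - Q y) / (y - h - y) := by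
  rw [show y - h - y = -h by ring, div_neg, ← neg_div, neg_sub]

/-- left slopes are ≤ right slopes -/
lemma lslope_le_rslope (hQ : ConvexOn ℝ univ Q) {y h k : ℝ} (hh : 0 < h) (hk : 0 < k) :
    (Q y - Q (y - h)) / h ≤ (Q (y + k) - Q y) / k := by
  have h1 : (Q (y - h) - Q y) / (y - h - y) ≤ (Q (y + k) - Q y) / (y + k - y) :=
    secant hQ (by linarith) (by linarith) (by linarith)
  rw [lslope_eq y h hh.ne']
  simpa using h1

lemma lslope_mono_h (hQ : ConvexOn ℝ univ Q) {y h h' : ℝ} (hh' : 0 < h') (hh : h' ≤ h) :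
    (Q y - Q (y - h)) / h ≤ (Q y - Q (y - h')) / h' := by
  have h0 : (0:ℝ) < h := lt_of_lt_of_le hh' hh
  have h1 : (Q (y - h) - Q y) / (y - h - y) ≤ (Q (y - h') - Q y) / (y - h' - y) :=
    secant hQ (by linarith) (by linarith) (by linarith)
  rw [lslope_eq y h h0.ne', lslope_eq y h' hh'.ne']
  exact h1

lemma QL_bddAbove (hQ : ConvexOn ℝ univ Q) (y : ℝ) :
    BddAbove ((fun h : ℝ => (Q y - Q (y - h)) / h) '' Ioi 0) := by
  refine ⟨Q (y + 1) - Q y, ?_⟩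
  rintro z ⟨h, hh, rfl⟩
  have hh' : (0:ℝ) < h := hh
  have := lslope_le_rslope hQ (y := y) (k := 1) hh' one_pos
  simpa using this

lemma lslope_le_QL (hQ : ConvexOn ℝ univ Q) {y h : ℝ} (hh : 0 < h) :
    (Q y - Q (y - h)) / h ≤ QL Q y :=
  le_csSup (QL_bddAbove hQ y) ⟨h, hh, rfl⟩

lemma QL_le_rslope (hQ : ConvexOn ℝ univ Q) {y k : ℝ} (hk : 0 < k) :
    QL Q y ≤ (Q (y + k) - Q y) / k := by
  refine csSup_le ⟨_, ⟨1, mem_Ioi.2 one_pos, rfl⟩⟩ ?_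
  rintro z ⟨h, hh, rfl⟩
  exact lslope_le_rslope hQ (mem_Ioi.1 hh) hk

/-- the subgradient inequality for `QL`. -/
lemma QL_subgradient (hQ : ConvexOn ℝ univ Q) (y d : ℝ) :
    Q y - d * QL Q y ≤ Q (y - d) := by
  rcases lt_trichotomy d 0 with hd | rfl | hd
  · have h1 := QL_le_rslope hQ (y := y) (k := -d) (by linarith)
    rw [le_div_iff₀ (by linarith : (0:ℝ) < -d)] at h1
    have e : y + -d = y - d := by ring
    rw [e] at h1
    nlinarith
  · simp
  · have := lslope_le_QL hQ (y := y) hd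
    rw [div_le_iff₀ hd] at this
    nlinarith

lemma QL_mono (hQ : ConvexOn ℝ univ Q) : Monotone (QL Q) := by
  intro y y' hyy'
  rcases eq_or_lt_of_le hyy' with rfl | h
  · exact le_rfl
  · have h1 : QL Q y ≤ (Q (y + (y' - y)) - Q y) / (y' - y) :=
      QL_le_rslope hQ (by linarith)
    have h2 : (Q y' - Q (y' - (y' - y))) / (y' - y) ≤ QL Q y' :=
      lslope_le_QL hQ (by linarith)
    have e1 : y + (y' - y) = y' := by ring
    have e2 : y' - (y' - y) = y := by ring
    rw [e1] at h1; rw [e2] at h2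
    exact le_trans h1 h2

/-- even convex functions are monotone w.r.t. absolute value -/
lemma Q_abs_mono (hQ : ConvexOn ℝ univ Q) (hQe : ∀ t, Q (-t) = Q t)
    {u v : ℝ} (huv : |u| ≤ |v|) : Q u ≤ Q v := by
  have hQv : Q |v| = Q v := by
    rcases abs_choice v with h | h
    · rw [h]
    · rw [h, hQe]
  rcases eq_or_lt_of_le (abs_nonneg v) with h0 | h0
  · have : u = 0 := by
      have := abs_nonneg u
      have : |u| = 0 := le_antisymm (by rw [← h0] at huv; exact huv) (abs_nonneg u)
      exact abs_eq_zero.1 this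
    have hv : v = 0 := abs_eq_zero.1 h0.symm
    rw [this, hv]
  · set w := |v| with hw
    have ha : (0:ℝ) ≤ (w - u) / (2 * w) := by
      have h1 : u ≤ w := (le_abs_self u).trans huv
      exact div_nonneg (by linarith) (by linarith)
    have hb : (0:ℝ) ≤ (w + u) / (2 * w) := by
      have h1 : -w ≤ u := (neg_le_of_abs_le huv)
      have h2 : 0 ≤ w + u := by linarith
      exact div_nonneg h2 (by linarith)
    have hab : (w - u) / (2 * w) + (w + u) / (2 * w) = 1 := by
      rw [← add_div]; rw [show w - u + (w + u) = 2 * w by ring]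
      exact div_self (by positivity)
    have := hQ.2 (mem_univ (-w)) (mem_univ w) ha hb hab
    have he : ((w - u) / (2 * w)) • (-w) + ((w + u) / (2 * w)) • w = u := by
      simp only [smul_eq_mul]
      field_simp
      ring
    rw [he] at this
    calc Q u ≤ (w - u) / (2 * w) * Q (-w) + (w + u) / (2 * w) * Q w := this
      _ = ((w - u) / (2 * w) + (w + u) / (2 * w)) * Q w := by rw [hQe]; ring
      _ = Q w := by rw [hab, one_mul]
      _ = Q v := hQv

lemma Q0_lt (hQ : StrictConvexOn ℝ univ Q) (hQe : ∀ t, Q (-t) = Q t) {y : ℝ} (hy : y ≠ 0) :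
    Q 0 < Q y := by
  have hne : y ≠ -y := by
    intro h
    apply hy
    linarith [h]
  have h2 := hQ.2 (mem_univ y) (mem_univ (-y)) hne (by norm_num : (0:ℝ) < 1/2)
    (by norm_num : (0:ℝ) < 1/2) (by norm_num)
  have he : (1/2 : ℝ) • y + (1/2 : ℝ) • (-y) = 0 := by
    simp only [smul_eq_mul]; ring
  rw [he] at h2
  simp only [smul_eq_mul] at h2
  rw [hQe] at h2
  linarith

lemma QL_pos (hQ : StrictConvexOn ℝ univ Q) (hQe : ∀ t, Q (-t) = Q t) {y : ℝ} (hy : 0 < y) :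
    0 < QL Q y := by
  have h1 : (Q y - Q (y - y)) / y ≤ QL Q y := lslope_le_QL hQ.convexOn hy
  have h2 : 0 < (Q y - Q 0) / y := by
    have h3 := Q0_lt hQ hQe hy.ne'
    exact div_pos (by linarith) hy
  simp only [sub_self] at h1
  linarith

lemma QL_nonpos_imp (hQ : StrictConvexOn ℝ univ Q) (hQe : ∀ t, Q (-t) = Q t) {y : ℝ}
    (h : QL Q y ≤ 0) : y ≤ 0 := by
  by_contra hc
  exact absurd h (not_le.2 (QL_pos hQ hQe (not_le.1 hc)))

lemma Q_continuous (hQ : ConvexOn ℝ univ Q) : Continuous Q := by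
  have h := hQ.continuousOn isOpen_univ
  exact continuousOn_univ.1 h

/-- a two-point Lipschitz bound for convex functions on a window. -/
lemma Q_lip (hQ : ConvexOn ℝ univ Q) (lo hi : ℝ) {u v : ℝ} (hu : u ∈ Icc lo hi)
    (hv : v ∈ Icc lo hi) :
    |Q u - Q v| ≤ (max (|Q lo - Q (lo - 1)|) (|Q (hi + 1) - Q hi|)) * |u - v| := by
  set K := max (|Q lo - Q (lo - 1)|) (|Q (hi + 1) - Q hi|) with hK
  -- wlog u ≤ v
  have main : ∀ u v : ℝ, u ∈ Icc lo hi → v ∈ Icc lo hi → u < v → |Q v - Q u| ≤ K * (v - u) := by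
    intro u v hu hv huv
    have hs1 : (Q v - Q u) / (v - u) ≤ (Q (hi + 1) - Q u) / (hi + 1 - u) := by
      refine secant hQ (a := u) (by linarith) (by linarith [hv.2]) (by linarith [hv.2])
    have hs2 : (Q u - Q (hi + 1)) / (u - (hi + 1)) ≤ (Q hi - Q (hi + 1)) / (hi - (hi + 1)) := by
      refine secant hQ (a := hi + 1) (by intro hh; linarith [hu.2]) (by intro hh; linarith) (by linarith [hu.2])
    have e2 : (Q hi - Q (hi + 1)) / (hi - (hi + 1)) = Q (hi + 1) - Q hi := by
      rw [show hi - (hi + 1) = -1 by ring]; field_simp; ring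
    have e2' : (Q u - Q (hi + 1)) / (u - (hi + 1)) = (Q (hi + 1) - Q u) / (hi + 1 - u) := by
      rw [show u - (hi+1) = -((hi+1) - u) by ring, div_neg, ← neg_div, neg_sub]
    have hub : (Q v - Q u) / (v - u) ≤ Q (hi + 1) - Q hi := by
      rw [e2, e2'] at hs2; exact le_trans hs1 hs2
    -- lower bound
    have hs3 : (Q (lo - 1) - Q v) / (lo - 1 - v) ≤ (Q u - Q v) / (u - v) := by
      refine secant hQ (a := v) (by linarith [hu.1]) (huv.ne) (by linarith [hu.1])
    have hs4 : (Q (lo - 1) - Q lo) / (lo - 1 - lo) ≤ (Q (lo - 1) - Q v) / (lo - 1 - v) := by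
      have := secant hQ (a := lo - 1) (x := lo) (y := v) (by intro hh; linarith) (by intro hh; linarith [hv.1]) (by linarith [hv.1])
      rw [show (Q lo - Q (lo-1)) / (lo - (lo -1)) = Q lo - Q (lo - 1) by rw [show lo - (lo-1) = 1 by ring]; field_simp] at this
      -- this : Q lo - Q (lo-1) ≤ (Q v - Q (lo-1))/(v - (lo -1))
      have e3 : (Q (lo - 1) - Q lo) / (lo - 1 - lo) = Q lo - Q (lo - 1) := by
        rw [show lo - 1 - lo = -1 by ring]; field_simp; ring
      have e4 : (Q (lo - 1) - Q v) / (lo - 1 - v) = (Q v - Q (lo - 1)) / (v - (lo - 1)) := by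
        rw [show lo - 1 - v = -(v - (lo - 1)) by ring, div_neg, ← neg_div, neg_sub]
      rw [e3, e4]; exact this
    have e5 : (Q u - Q v) / (u - v) = (Q v - Q u) / (v - u) := by
      rw [show u - v = -(v - u) by ring, div_neg, ← neg_div, neg_sub]
    have hlb : Q lo - Q (lo - 1) ≤ (Q v - Q u) / (v - u) := by
      have e3 : (Q (lo - 1) - Q lo) / (lo - 1 - lo) = Q lo - Q (lo - 1) := by
        rw [show lo - 1 - lo = -1 by ring]; field_simp; ring
      rw [← e3]
      rw [e5] at hs3
      exact le_trans hs4 hs3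
    have hKub : (Q v - Q u) / (v - u) ≤ K := le_trans hub (le_trans (le_abs_self _) (le_max_right _ _))
    have hKlb : -K ≤ (Q v - Q u) / (v - u) := by
      have : -K ≤ -(|Q lo - Q (lo - 1)|) := neg_le_neg (le_max_left _ _)
      have h' : -(|Q lo - Q (lo - 1)|) ≤ Q lo - Q (lo - 1) := neg_abs_le _
      linarith
    have habs : |(Q v - Q u) / (v - u)| ≤ K := abs_le.2 ⟨hKlb, hKub⟩
    have hvu : (0:ℝ) < v - u := by linarith
    calc |Q v - Q u| = |(Q v - Q u) / (v - u)| * (v - u) := by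
          rw [abs_div, abs_of_pos hvu]; field_simp
      _ ≤ K * (v - u) := by
          apply mul_le_mul_of_nonneg_right habs hvu.le
  rcases lt_trichotomy u v with h | rfl | h
  · have h2 := main u v hu hv h
    rw [abs_sub_comm]
    rw [show |u - v| = v - u by rw [abs_sub_comm]; exact abs_of_pos (by linarith)]
    exact h2
  · simp
  · have h2 := main v u hv hu h
    rw [show |u - v| = u - v from abs_of_pos (by linarith)]
    exact h2

end Stmt10Aux

namespace Stmt10Aux

open intervalIntegral in
/-- Core combinatorial lemma (rising-sun style). -/
lemma lemmaX {a b : ℝ} (hab : a < b) {f g : ℝ → ℝ} {C : ℝ}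
    (hfm : Measurable f) (hgm : Measurable g)
    (hfC : ∀ x, |f x| ≤ C) (hgC : ∀ x, |g x| ≤ C)
    (himp : ∀ x, g x ≤ 0 → f x ≤ 0)
    (hF : 0 < ∫ x in Icc a b, f x) (hG : (∫ x in Icc a b, g x) ≤ 0)
    (hng : ∀ s t, a ≤ s → s < t → t ≤ b → (∫ x in Icc s t, g x) = 0 →
      (∫ x in Icc s t, f x) < 0) : False := by
  -- integrability
  have hIOn : ∀ (h : ℝ → ℝ), Measurable h → (∀ x, |h x| ≤ C) →
      ∀ s : Set ℝ, volume s ≠ ∞ → IntegrableOn h s volume := by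
    intro h hm hC s hs
    refine Integrable.mono' (g := fun _ => C) (integrableOn_const hs)
      hm.aestronglyMeasurable.restrict ?_
    exact ae_of_all _ (fun x => by simpa [Real.norm_eq_abs] using hC x)
  have hgiv : ∀ u v : ℝ, IntervalIntegrable g volume u v := by
    intro u v
    rw [intervalIntegrable_iff]
    exact hIOn g hgm hgC _ measure_Ioc_lt_top.ne
  have hfiv : ∀ u v : ℝ, IntervalIntegrable f volume u v := by
    intro u v
    rw [intervalIntegrable_iff]
    exact hIOn f hfm hfC _ measure_Ioc_lt_top.ne
  set Gf : ℝ → ℝ := fun t => ∫ x in a..t, g x with hGfdef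
  set Ff : ℝ → ℝ := fun t => ∫ x in a..t, f x with hFfdef
  have hGcont : Continuous Gf := continuous_primitive (fun _ _ => hgiv _ _) a
  have hFcont : Continuous Ff := continuous_primitive (fun _ _ => hfiv _ _) a
  have hGdiff : ∀ s t : ℝ, s ≤ t → Gf t - Gf s = ∫ x in Icc s t, g x := by
    intro s t hst
    rw [MeasureTheory.integral_Icc_eq_integral_Ioc, ← integral_of_le hst]
    exact integral_interval_sub_left (hgiv a t) (hgiv a s)
  have hFdiff : ∀ s t : ℝ, s ≤ t → Ff t - Ff s = ∫ x in Icc s t, f x := by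
    intro s t hst
    rw [MeasureTheory.integral_Icc_eq_integral_Ioc, ← integral_of_le hst]
    exact integral_interval_sub_left (hfiv a t) (hfiv a s)
  have hFfa : Ff a = 0 := by simp [hFfdef]
  have hGfa : Gf a = 0 := by simp [hGfdef]
  have hFb : 0 < Ff b := by
    have := hFdiff a b hab.le
    rw [hFfa, sub_zero] at this
    rw [this]; exact hF
  have hGb : Gf b ≤ 0 := by
    have := hGdiff a b hab.le
    rw [hGfa, sub_zero] at this
    rw [this]; exact hG
  have hng' : ∀ s t, a ≤ s → s < t → t ≤ b → Gf t = Gf s → Ff t < Ff s := by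
    intro s t h1 h2 h3 hGeq
    have hg0 : (∫ x in Icc s t, g x) = 0 := by
      rw [← hGdiff s t h2.le, hGeq, sub_self]
    have := hng s t h1 h2 h3 hg0
    rw [← hFdiff s t h2.le] at this
    linarith
  -- the set of running minima
  set T : Set ℝ := {x | x ∈ Icc a b ∧ ∀ s ∈ Icc a x, Gf x ≤ Gf s} with hTdef
  have haT : a ∈ T := by
    refine ⟨left_mem_Icc.2 hab.le, ?_⟩
    intro s hs
    have : s = a := le_antisymm (by simpa using hs.2) hs.1
    rw [this]
  have hTsub : T ⊆ Icc a b := fun x hx => hx.1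
  have hTclosed : IsClosed T := by
    rw [← isSeqClosed_iff_isClosed]
    intro xn x hxn hxlim
    constructor
    · have : ∀ n, xn n ∈ Icc a b := fun n => (hxn n).1
      exact isClosed_Icc.isSeqClosed this hxlim
    · intro s hs
      rcases eq_or_lt_of_le hs.2 with rfl | hslt
      · exact le_rfl
      · have hevent : ∀ᶠ n in atTop, s ≤ xn n := by
          filter_upwards [hxlim.eventually_const_lt hslt] with n hn
          exact hn.le
        have hGxn : ∀ᶠ n in atTop, Gf (xn n) ≤ Gf s := by
          filter_upwards [hevent] with n hn
          exact (hxn n).2 s ⟨hs.1, hn⟩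
        have hlim2 : Tendsto (fun n => Gf (xn n)) atTop (nhds (Gf x)) :=
          (hGcont.continuousAt.tendsto).comp hxlim
        exact le_of_tendsto hlim2 hGxn
  -- between consecutive points of T, Gf stays above and comes back to the same value
  have hgap : ∀ α β, α ∈ T → β ∈ T → α < β → (∀ u ∈ Ioo α β, u ∉ T) → Gf β = Gf α := by
    intro α β hα hβ hαβ hgapT
    have habove : ∀ u ∈ Ioo α β, Gf α < Gf u := by
      intro u hu
      by_contra hc
      push_neg at hc
      -- Gf u ≤ Gf α; take the min of Gf on [α, u]
      obtain ⟨v, hv, hvmin⟩ :=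
        isCompact_Icc.exists_isMinOn (nonempty_Icc.2 (le_of_lt hu.1)) (hGcont.continuousOn)
      have hvmin' : ∀ w ∈ Icc α u, Gf v ≤ Gf w := fun w hw => hvmin hw
      have hvle : Gf v ≤ Gf α := by
        have := hvmin' u ⟨hu.1.le, le_rfl⟩
        linarith
      have hvT : v ∈ T := by
        refine ⟨⟨le_trans hα.1.1 hv.1, le_trans hv.2 (le_trans hu.2.le hβ.1.2)⟩, ?_⟩
        intro s hs
        rcases le_or_gt s α with hsα | hsα
        · exact le_trans hvle (hα.2 s ⟨hs.1, hsα⟩)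
        · exact hvmin' s ⟨hsα.le, le_trans hs.2 hv.2⟩
      rcases eq_or_lt_of_le hv.1 with hveq | hαv
      · -- v = α : then u itself is in T
        subst hveq
        have huT : u ∈ T := by
          refine ⟨⟨le_trans hα.1.1 hu.1.le, le_trans hu.2.le hβ.1.2⟩, ?_⟩
          intro s hs
          rcases le_or_gt s α with hsα | hsα
          · exact le_trans hc (hα.2 s ⟨hs.1, hsα⟩)
          · exact le_trans hc (hvmin' s ⟨hsα.le, hs.2⟩)
        exact hgapT u hu huT
      · exact hgapT v ⟨hαv, lt_of_le_of_lt hv.2 hu.2⟩ hvT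
    -- hence Gf β ≥ Gf α by continuity
    have hclos : β ∈ closure (Ioo α β) := by
      rw [closure_Ioo hαβ.ne]
      exact ⟨hαβ.le, le_rfl⟩
    have hsubset : Ioo α β ⊆ {x | Gf α ≤ Gf x} := fun u hu => (habove u hu).le
    have hclosed2 : IsClosed {x | Gf α ≤ Gf x} := isClosed_le continuous_const hGcont
    have hβge : Gf α ≤ Gf β := (hclosed2.closure_subset_iff.2 hsubset) hclos
    have hβle : Gf β ≤ Gf α := hβ.2 α ⟨hα.1.1, hαβ.le⟩
    linarith
  -- Step A : Ff is nonpositive on T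
  have stepA : ∀ τ ∈ T, Ff τ ≤ 0 := by
    intro τ hτ
    rcases eq_or_lt_of_le hτ.1.1 with haτ | haτ
    · rw [← haτ, hFfa]
    set U : Set ℝ := (Ioo a τ) \ T with hUdef
    have hUopen : IsOpen U := isOpen_Ioo.sdiff hTclosed
    have hUsub : U ⊆ Ioo a τ := fun x hx => hx.1
    set al : ℝ → ℝ := fun x => sSup (T ∩ Icc a x) with haldef
    set be : ℝ → ℝ := fun x => sInf (T ∩ Icc x τ) with hbedef
    have hcptL : ∀ x : ℝ, IsCompact (T ∩ Icc a x) := fun x => isCompact_Icc.inter_left hTclosed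
    have hcptR : ∀ x : ℝ, IsCompact (T ∩ Icc x τ) := fun x => isCompact_Icc.inter_left hTclosed
    have halmem : ∀ x ∈ U, al x ∈ T ∩ Icc a x := by
      intro x hx
      exact (hcptL x).sSup_mem ⟨a, haT, le_rfl, (hUsub hx).1.le⟩
    have hbemem : ∀ x ∈ U, be x ∈ T ∩ Icc x τ := by
      intro x hx
      exact (hcptR x).sInf_mem ⟨τ, hτ, (hUsub hx).2.le, le_rfl⟩
    have hallt : ∀ x ∈ U, al x < x := by
      intro x hx
      rcases eq_or_lt_of_le (halmem x hx).2.2 with h | h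
      · exfalso; exact hx.2 (h ▸ (halmem x hx).1)
      · exact h
    have hbelt : ∀ x ∈ U, x < be x := by
      intro x hx
      rcases eq_or_lt_of_le (hbemem x hx).2.1 with h | h
      · exfalso; exact hx.2 (h ▸ (hbemem x hx).1)
      · exact h
    have hbddL : ∀ x : ℝ, BddAbove (T ∩ Icc a x) := fun x => bddAbove_Icc.mono inter_subset_right
    have hbddR : ∀ x : ℝ, BddBelow (T ∩ Icc x τ) := fun x => bddBelow_Icc.mono inter_subset_right
    have hIooU : ∀ x ∈ U, Ioo (al x) (be x) ⊆ U := by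
      intro x hx y hy
      have hya : a < y := lt_of_le_of_lt (halmem x hx).2.1 hy.1
      have hyτ : y < τ := lt_of_lt_of_le hy.2 (hbemem x hx).2.2
      refine ⟨⟨hya, hyτ⟩, ?_⟩
      intro hyT
      rcases le_or_gt y x with hyx | hyx
      · exact absurd (le_csSup (hbddL x) ⟨hyT, hya.le, hyx⟩) (not_le.2 hy.1)
      · exact absurd (csInf_le (hbddR x) ⟨hyT, hyx.le, hyτ.le⟩) (not_le.2 hy.2)
    have hstab : ∀ x ∈ U, ∀ y ∈ Ioo (al x) (be x), al y = al x ∧ be y = be x := by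
      intro x hx y hy
      have hyU : y ∈ U := hIooU x hx hy
      constructor
      · have hsets : T ∩ Icc a y = T ∩ Icc a (al x) := by
          ext t
          constructor
          · rintro ⟨htT, hta, hty⟩
            refine ⟨htT, hta, ?_⟩
            by_contra hcc
            push_neg at hcc
            have htIoo : t ∈ Ioo (al x) (be x) := ⟨hcc, lt_of_le_of_lt hty hy.2⟩
            exact (hIooU x hx htIoo).2 htT
          · rintro ⟨htT, hta, htal⟩
            exact ⟨htT, hta, le_trans htal hy.1.le⟩
        rw [haldef]
        simp only
        rw [hsets]
        apply le_antisymm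
        · exact csSup_le ⟨al x, (halmem x hx).1, (halmem x hx).2.1, le_rfl⟩
            (fun t ht => ht.2.2)
        · exact le_csSup (bddAbove_Icc.mono inter_subset_right)
            ⟨(halmem x hx).1, (halmem x hx).2.1, le_rfl⟩
      · have hsets : T ∩ Icc y τ = T ∩ Icc (be x) τ := by
          ext t
          constructor
          · rintro ⟨htT, hty, htτ⟩
            refine ⟨htT, ?_, htτ⟩
            by_contra hcc
            push_neg at hcc
            have htIoo : t ∈ Ioo (al x) (be x) := ⟨lt_of_lt_of_le hy.1 hty, hcc⟩
            exact (hIooU x hx htIoo).2 htT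
          · rintro ⟨htT, htbe, htτ⟩
            exact ⟨htT, le_trans hy.2.le htbe, htτ⟩
        rw [hbedef]
        simp only
        rw [hsets]
        apply le_antisymm
        · exact csInf_le (bddBelow_Icc.mono inter_subset_right)
            ⟨(hbemem x hx).1, le_rfl, (hbemem x hx).2.2⟩
        · exact le_csInf ⟨be x, (hbemem x hx).1, le_rfl, (hbemem x hx).2.2⟩
            (fun t ht => ht.2.1)
    -- countable family of components
    set S : Set (ℝ × ℝ) := (fun x => (al x, be x)) '' (U ∩ range (fun q : ℚ => (q : ℝ))) with hSdef
    have hScnt : S.Countable :=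
      ((countable_range (fun q : ℚ => (q : ℝ))).mono inter_subset_right).image _
    have hSprop : ∀ p ∈ S, p.1 ∈ T ∧ p.2 ∈ T ∧ p.1 < p.2 ∧ a ≤ p.1 ∧ p.2 ≤ τ ∧
        Ioo p.1 p.2 ⊆ U := by
      rintro p ⟨x, hx, rfl⟩
      have hxU := hx.1
      exact ⟨(halmem x hxU).1, (hbemem x hxU).1,
        lt_trans (hallt x hxU) (hbelt x hxU), (halmem x hxU).2.1, (hbemem x hxU).2.2,
        hIooU x hxU⟩
    have hUeq : U = ⋃ p ∈ S, Ioo (Prod.fst p) (Prod.snd p) := by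
      apply Subset.antisymm
      · intro x hx
        obtain ⟨q, hq1, hq2⟩ := exists_rat_btwn (lt_trans (hallt x hx) (hbelt x hx))
        have hqIoo : (q : ℝ) ∈ Ioo (al x) (be x) := ⟨hq1, hq2⟩
        have hqU : (q : ℝ) ∈ U := hIooU x hx hqIoo
        have hstq := hstab x hx _ hqIoo
        refine mem_biUnion (⟨(q : ℝ), ⟨hqU, mem_range_self q⟩, rfl⟩ : (al q, be q) ∈ S) ?_
        simp only
        rw [hstq.1, hstq.2]
        exact ⟨hallt x hx, hbelt x hx⟩
      · intro y hy
        simp only [mem_iUnion] at hy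
        obtain ⟨p, hpS, hyp⟩ := hy
        exact (hSprop p hpS).2.2.2.2.2 hyp
    have hSdisj : ∀ p ∈ S, ∀ p' ∈ S, p ≠ p' →
        Disjoint (Ioo (Prod.fst p) (Prod.snd p)) (Ioo (Prod.fst p') (Prod.snd p')) := by
      rintro p ⟨x, hx, rfl⟩ p' ⟨x', hx', rfl⟩ hne
      rw [Set.disjoint_left]
      intro y hy hy'
      have h1 := hstab x hx.1 y hy
      have h2 := hstab x' hx'.1 y hy'
      apply hne
      show (al x, be x) = (al x', be x')
      rw [Prod.mk.injEq]
      exact ⟨by rw [← h1.1, h2.1], by rw [← h1.2, h2.2]⟩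
    -- partition of [a, τ]
    have hUmeas : MeasurableSet U := hUopen.measurableSet
    have hTι : MeasurableSet (T ∩ Icc a τ) := (hTclosed.measurableSet).inter measurableSet_Icc
    have hpart : Icc a τ = (T ∩ Icc a τ) ∪ U := by
      apply Subset.antisymm
      · intro x hx
        by_cases hxT : x ∈ T
        · exact Or.inl ⟨hxT, hx⟩
        · refine Or.inr ⟨⟨?_, ?_⟩, hxT⟩
          · rcases eq_or_lt_of_le hx.1 with h | h
            · exact absurd (h ▸ haT) hxT
            · exact h
          · rcases eq_or_lt_of_le hx.2 with h | h
            · exact absurd (h ▸ hτ) hxT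
            · exact h
      · rintro x (hx | hx)
        · exact hx.2
        · exact ⟨(hUsub hx).1.le, (hUsub hx).2.le⟩
    have hvolfin : ∀ s : Set ℝ, s ⊆ Icc a τ → volume s ≠ ∞ := by
      intro s hs
      exact (lt_of_le_of_lt (measure_mono hs) measure_Icc_lt_top).ne
    have hdisjTU : Disjoint (T ∩ Icc a τ) U := by
      rw [Set.disjoint_left]
      intro x hx hxU
      exact hxU.2 hx.1
    have hUsubIcc : U ⊆ Icc a τ := fun x hx => ⟨(hUsub hx).1.le, (hUsub hx).2.le⟩
    have hsplit : (∫ x in Icc a τ, f x) =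
        (∫ x in T ∩ Icc a τ, f x) + ∫ x in U, f x := by
      have h := setIntegral_union hdisjTU hUmeas
        (hIOn f hfm hfC _ (hvolfin _ inter_subset_right))
        (hIOn f hfm hfC _ (hvolfin _ hUsubIcc))
      rw [← hpart] at h
      exact h
    -- the integral over U is nonpositive
    have hTU : (∫ x in U, f x) ≤ 0 := by
      haveI := hScnt.to_subtype
      have hUeq' : U = ⋃ (p : S), Ioo (p : ℝ × ℝ).1 (p : ℝ × ℝ).2 := by
        rw [hUeq]; exact biUnion_eq_iUnion _ _
      rw [hUeq']
      rw [MeasureTheory.integral_iUnion (fun p => measurableSet_Ioo)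
        (fun p p' hne => hSdisj _ p.2 _ p'.2 (fun h => hne (Subtype.ext h)))
        (by
          rw [← hUeq']
          exact hIOn f hfm hfC _ (hvolfin _ hUsubIcc))]
      apply tsum_nonpos
      intro p
      obtain ⟨h1T, h2T, h12, h1a, h2τ, hpU⟩ := hSprop _ p.2
      have hgape : Gf (p : ℝ × ℝ).2 = Gf (p : ℝ × ℝ).1 := by
        apply hgap _ _ h1T h2T h12
        intro u hu
        exact (hpU hu).2
      have hlt : Ff (p : ℝ × ℝ).2 < Ff (p : ℝ × ℝ).1 :=
        hng' _ _ h1a h12 (le_trans h2τ hτ.1.2) hgape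
      have : (∫ x in Ioo (p : ℝ × ℝ).1 (p : ℝ × ℝ).2, f x) =
          Ff (p : ℝ × ℝ).2 - Ff (p : ℝ × ℝ).1 := by
        rw [← MeasureTheory.integral_Ioc_eq_integral_Ioo, ← intervalIntegral.integral_of_le h12.le]
        exact (intervalIntegral.integral_interval_sub_left (hfiv a _) (hfiv a _)).symm
      rw [this]
      linarith
    -- the integral over T is nonpositive : Lebesgue density argument
    have hTneg : (∫ x in T ∩ Icc a τ, f x) ≤ 0 := by
      have hgloc : LocallyIntegrable g volume := by
        intro x
        exact ⟨Metric.closedBall x 1, Metric.closedBall_mem_nhds x one_pos,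
          hIOn g hgm hgC _ (by rw [Real.volume_closedBall]; exact ENNReal.ofReal_ne_top)⟩
      have hleb := (Besicovitch.vitaliFamily (volume : Measure ℝ)).ae_tendsto_average_norm_sub hgloc
      have hdens := Besicovitch.ae_tendsto_measure_inter_div (volume : Measure ℝ) T
      have hgae : ∀ᵐ x ∂(volume.restrict T), g x ≤ 0 := by
        filter_upwards [hdens, ae_restrict_of_ae hleb,
          ae_restrict_mem hTclosed.measurableSet] with x hxdens hxleb hxT
        -- ball averages
        have hxleb' : Tendsto (fun r => ⨍ y in Metric.closedBall x r, ‖g y - g x‖)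
            (𝓝[>] (0:ℝ)) (𝓝 0) :=
          hxleb.comp (Besicovitch.tendsto_filterAt volume x)
        set A : ℝ → ℝ := fun r => ⨍ y in Metric.closedBall x r, ‖g y - g x‖ with hAdef
        have hev : ∀ᶠ r in 𝓝[>] (0:ℝ), g x ≤ 4 * A r := by
          have h34 : (ENNReal.ofReal (3/4) : ℝ≥0∞) < 1 := by
            rw [← ENNReal.ofReal_one]
            exact (ENNReal.ofReal_lt_ofReal_iff one_pos).2 (by norm_num)
          filter_upwards [hxdens.eventually (lt_mem_nhds h34), self_mem_nhdsWithin]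
            with r hr hrpos
          have hrpos' : (0:ℝ) < r := hrpos
          -- find a point of T in [x + r/2, x + r]
          have hT2 : (T ∩ Icc (x + r/2) (x + r)).Nonempty := by
            by_contra hcon
            rw [not_nonempty_iff_eq_empty] at hcon
            have hsub2 : T ∩ Metric.closedBall x r ⊆ Icc (x - r) (x + r/2) := by
              intro y hy
              have hy1 : y ∈ Icc (x - r) (x + r) := by
                have := hy.2
                rw [Real.closedBall_eq_Icc] at this
                exact this
              refine ⟨hy1.1, ?_⟩
              by_contra hy2
              push_neg at hy2
              have : y ∈ T ∩ Icc (x + r/2) (x + r) := ⟨hy.1, hy2.le, hy1.2⟩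
              rw [hcon] at this
              exact this
            have hm1 : volume (T ∩ Metric.closedBall x r) ≤ ENNReal.ofReal (3/4 * (2*r)) := by
              refine le_trans (measure_mono hsub2) ?_
              rw [Real.volume_Icc]
              apply ENNReal.ofReal_le_ofReal
              ring_nf
              linarith
            have hm2 : ENNReal.ofReal (3/4) * volume (Metric.closedBall x r) <
                volume (T ∩ Metric.closedBall x r) := by
              rw [ENNReal.lt_div_iff_mul_lt] at hr
              · exact hr
              · left
                rw [Real.volume_closedBall]
                simp only [ne_eq, ENNReal.ofReal_eq_zero, not_le]
                linarith
              · left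
                rw [Real.volume_closedBall]
                exact ENNReal.ofReal_ne_top
            rw [Real.volume_closedBall, ← ENNReal.ofReal_mul (by norm_num : (0:ℝ) ≤ 3/4)]
              at hm2
            exact absurd (lt_of_lt_of_le hm2 hm1) (lt_irrefl _)
          obtain ⟨t, htT, ht1, ht2⟩ := hT2
          have htx : x < t := by linarith
          -- Gf t ≤ Gf x
          have hGtx : Gf t - Gf x ≤ 0 := by
            have := htT.2 x ⟨hxT.1.1, htx.le⟩
            linarith
          have hint : (∫ y in Icc x t, g y) ≤ 0 := by
            rw [← hGdiff x t htx.le]; exact hGtx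
          -- compare with the average
          have hIccBall : Icc x t ⊆ Metric.closedBall x r := by
            intro y hy
            rw [Real.closedBall_eq_Icc]
            constructor
            · linarith [hy.1]
            · linarith [hy.2]
          have hest : g x * (t - x) ≤ ∫ y in Metric.closedBall x r, ‖g y - g x‖ := by
            have e1 : g x * (t - x) = (∫ y in Icc x t, g x) := by
              rw [setIntegral_const]
              simp [Real.volume_Icc, ENNReal.toReal_ofReal (by linarith : (0:ℝ) ≤ t - x)]
              rw [max_eq_left (by linarith : (0:ℝ) ≤ t - x)]
              ring
            have e2 : (∫ y in Icc x t, g x) - (∫ y in Icc x t, g y) =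
                ∫ y in Icc x t, (g x - g y) := by
              rw [integral_sub (integrableOn_const (C := g x) (by
                rw [Real.volume_Icc]; exact ENNReal.ofReal_ne_top))
                (hIOn g hgm hgC _ (by
                  rw [Real.volume_Icc]; exact ENNReal.ofReal_ne_top))]
            have e3 : (∫ y in Icc x t, (g x - g y)) ≤ ∫ y in Icc x t, ‖g y - g x‖ := by
              apply setIntegral_mono_on
              · exact Integrable.sub (integrableOn_const (by
                  rw [Real.volume_Icc]; exact ENNReal.ofReal_ne_top))
                  (hIOn g hgm hgC _ (by
                    rw [Real.volume_Icc]; exact ENNReal.ofReal_ne_top))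
              · apply Integrable.norm
                exact Integrable.sub (hIOn g hgm hgC _ (by
                    rw [Real.volume_Icc]; exact ENNReal.ofReal_ne_top))
                  (integrableOn_const (by
                    rw [Real.volume_Icc]; exact ENNReal.ofReal_ne_top))
              · exact measurableSet_Icc
              · intro y _
                rw [Real.norm_eq_abs, abs_sub_comm]
                exact le_trans (le_abs_self _) le_rfl
            have e4 : (∫ y in Icc x t, ‖g y - g x‖) ≤
                ∫ y in Metric.closedBall x r, ‖g y - g x‖ := by
              apply setIntegral_mono_set
              · apply Integrable.norm
                exact Integrable.sub (hIOn g hgm hgC _ (by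
                    rw [Real.volume_closedBall]; exact ENNReal.ofReal_ne_top))
                  (integrableOn_const (by
                    rw [Real.volume_closedBall]; exact ENNReal.ofReal_ne_top))
              · exact ae_of_all _ (fun y => norm_nonneg _)
              · exact HasSubset.Subset.eventuallyLE hIccBall
            linarith
          have hAval : (∫ y in Metric.closedBall x r, ‖g y - g x‖) = 2 * r * A r := by
            rw [hAdef]
            simp only
            rw [setAverage_eq]
            rw [Real.volume_real_closedBall (by linarith : (0:ℝ) ≤ r)]
            rw [smul_eq_mul]
            field_simp
          have hA0 : 0 ≤ A r := by
            rw [hAdef]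
            simp only
            rw [setAverage_eq, smul_eq_mul]
            apply mul_nonneg
            · positivity
            · exact setIntegral_nonneg measurableSet_closedBall (fun y _ => norm_nonneg _)
          rw [hAval] at hest
          nlinarith [hest, hA0, ht1, ht2, hrpos']
        have h4A : Tendsto (fun r => 4 * A r) (𝓝[>] (0:ℝ)) (𝓝 (4 * 0)) :=
          hxleb'.const_mul 4
        rw [mul_zero] at h4A
        exact ge_of_tendsto h4A hev
      have hfae : ∀ᵐ x ∂(volume.restrict (T ∩ Icc a τ)), f x ≤ 0 := by
        have : ∀ᵐ x ∂(volume.restrict T), f x ≤ 0 := by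
          filter_upwards [hgae] with x hx using himp x hx
        exact ae_restrict_of_ae_restrict_of_subset inter_subset_left this
      exact setIntegral_nonpos_of_ae_restrict hfae
    -- conclude
    have hFτ : Ff τ = ∫ x in Icc a τ, f x := by
      have := hFdiff a τ haτ.le
      rw [hFfa, sub_zero] at this
      exact this.symm ▸ rfl
    rw [hFτ, hsplit]
    linarith
  -- Final step
  set z : ℝ := Gf b with hzdef
  set Sb : Set ℝ := {x ∈ Icc a b | Gf x = z} with hSbdef
  have hSbne : Sb.Nonempty := ⟨b, right_mem_Icc.2 hab.le, rfl⟩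
  have hSbclosed : IsClosed Sb := by
    have : Sb = Icc a b ∩ {x | Gf x = z} := by
      ext x
      constructor
      · rintro ⟨h1, h2⟩; exact ⟨h1, h2⟩
      · rintro ⟨h1, h2⟩; exact ⟨h1, h2⟩
    rw [this]
    exact isClosed_Icc.inter (isClosed_eq hGcont continuous_const)
  set σ : ℝ := sInf Sb with hσdef
  have hσmem : σ ∈ Sb := hSbclosed.csInf_mem hSbne ⟨a, fun x hx => hx.1.1⟩
  have hσT : σ ∈ T := by
    refine ⟨hσmem.1, ?_⟩
    intro s hs
    by_contra hcon
    push_neg at hcon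
    -- Gf s < Gf σ = z ≤ 0 = Gf a
    have hGσ : Gf σ = z := hσmem.2
    have hsz : Gf s < z := by rw [← hGσ]; exact hcon
    have hz0 : z ≤ 0 := hGb
    -- IVT on [a, s] : Gf a = 0 ≥ z > Gf s, so ∃ u ∈ [a,s], Gf u = z
    have hivt : z ∈ Gf '' Icc a s := by
      apply intermediate_value_Icc' hs.1 (hGcont.continuousOn)
      constructor
      · exact hsz.le
      · rw [hGfa]; exact hz0
    obtain ⟨u, hu, hGu⟩ := hivt
    have huSb : u ∈ Sb := by
      refine ⟨⟨hu.1, le_trans hu.2 (le_trans hs.2 hσmem.1.2)⟩, hGu⟩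
    have : σ ≤ u := csInf_le ⟨a, fun x hx => hx.1.1⟩ huSb
    have hss : s < σ := by
      rcases lt_or_eq_of_le hs.2 with h | h
      · exact h
      · exfalso; rw [h] at hcon; exact lt_irrefl _ hcon
    linarith [hu.2]
  have hFσ : Ff σ ≤ 0 := stepA σ hσT
  rcases eq_or_lt_of_le hσmem.1.2 with hσb | hσb
  · rw [hσb] at hFσ; linarith
  · have := hng' σ b hσmem.1.1 hσb le_rfl (by rw [hσmem.2])
    linarith

end Stmt10Aux

namespace Stmt10Aux

lemma integrableOn_of_bdd {h : ℝ → ℝ} {C : ℝ} (hm : Measurable h) (hC : ∀ x, |h x| ≤ C)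
    {s : Set ℝ} (hs : volume s ≠ ∞) : IntegrableOn h s volume := by
  refine Integrable.mono' (g := fun _ => C) (integrableOn_const hs)
    hm.aestronglyMeasurable.restrict ?_
  exact ae_of_all _ (fun x => by simpa [Real.norm_eq_abs] using hC x)

lemma mainLemma (Q : ℝ → ℝ) (hQ : StrictConvexOn ℝ univ Q) (hQe : ∀ t, Q (-t) = Q t)
    (hQ0 : ∀ t, 0 ≤ Q t) (ε M : ℝ) (hε : 0 < ε)
    (η : ℝ → ℝ) (hη : Measurable η) (hηr : ∀ x, η x ∈ Icc (-ε) M)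
    (a b : ℝ) (hab : a < b)
    (hmono : ∀ δ : ℝ, 0 < δ → (∫ x in Icc a b, Q (η x)) ≤ ∫ x in Icc a b, Q (η x - δ))
    (henergy : Q ε * (b - a) < ∫ x in Icc a b, Q (η x))
    (hsub : ∀ s t, a ≤ s → s < t → t ≤ b →
      ∃ d, (∫ x in Icc s t, Q (η x - d)) < Q ε * (t - s)) :
    False := by
  have hQc : ConvexOn ℝ univ Q := hQ.convexOn
  have hQcont : Continuous Q := Q_continuous hQc
  have hMε : -ε ≤ M := le_trans (hηr 0).1 (hηr 0).2
  set w : ℝ := max ε M with hwdef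
  have hw0 : 0 < w := lt_of_lt_of_le hε (le_max_left _ _)
  have hηabs : ∀ x, |η x| ≤ w := by
    intro x
    rw [abs_le]
    constructor
    · calc -w ≤ -ε := by simp [hwdef]
        _ ≤ η x := (hηr x).1
    · exact le_trans (hηr x).2 (le_max_right _ _)
  -- bounds for Q ∘ (η - d)
  have hQd_bdd : ∀ d : ℝ, ∀ x, |Q (η x - d)| ≤ Q (w + |d|) := by
    intro d x
    rw [abs_of_nonneg (hQ0 _)]
    apply Q_abs_mono hQc hQe
    rw [abs_of_nonneg (by positivity : (0:ℝ) ≤ w + |d|)]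
    calc |η x - d| ≤ |η x| + |d| := abs_sub _ _
      _ ≤ w + |d| := by linarith [hηabs x]
  have hQd_meas : ∀ d : ℝ, Measurable (fun x => Q (η x - d)) :=
    fun d => hQcont.measurable.comp (hη.sub measurable_const)
  have hQd_int : ∀ (d : ℝ) (s : Set ℝ), volume s ≠ ∞ →
      IntegrableOn (fun x => Q (η x - d)) s volume :=
    fun d s hs => integrableOn_of_bdd (hQd_meas d) (hQd_bdd d) hs
  have hIccfin : ∀ s t : ℝ, volume (Icc s t) ≠ ∞ := fun s t => measure_Icc_lt_top.ne
  -- the functions for lemmaX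
  set f : ℝ → ℝ := fun x => Q (η x) - Q ε with hfdef
  set g : ℝ → ℝ := fun x => QL Q (η x) with hgdef
  have hfm : Measurable f := by
    have : Measurable (fun x => Q (η x)) := hQcont.measurable.comp hη
    exact this.sub measurable_const
  have hgm : Measurable g := (QL_mono hQc).measurable.comp hη
  -- uniform bounds
  set Cg : ℝ := max (|QL Q (-ε)|) (|QL Q M|) with hCgdef
  have hgb : ∀ x, |g x| ≤ Cg := by
    intro x
    rw [abs_le]
    constructor
    · calc -Cg ≤ -(|QL Q (-ε)|) := neg_le_neg (le_max_left _ _)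
        _ ≤ QL Q (-ε) := neg_abs_le _
        _ ≤ g x := QL_mono hQc (hηr x).1
    · calc g x ≤ QL Q M := QL_mono hQc (hηr x).2
        _ ≤ |QL Q M| := le_abs_self _
        _ ≤ Cg := le_max_right _ _
  set Cf : ℝ := Q w + Q ε with hCfdef
  have hfb : ∀ x, |f x| ≤ Cf := by
    intro x
    have h1 : Q (η x) ≤ Q w := by
      apply Q_abs_mono hQc hQe
      rw [abs_of_pos hw0]; exact hηabs x
    have h2 : 0 ≤ Q (η x) := hQ0 _
    rw [abs_le]
    constructor
    · simp only [hfdef, hCfdef]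
      have := hQ0 w
      linarith
    · simp only [hfdef, hCfdef]
      have := hQ0 ε
      linarith
  set C : ℝ := max Cf Cg with hCdef
  have hfb' : ∀ x, |f x| ≤ C := fun x => le_trans (hfb x) (le_max_left _ _)
  have hgb' : ∀ x, |g x| ≤ C := fun x => le_trans (hgb x) (le_max_right _ _)
  -- implication
  have himp : ∀ x, g x ≤ 0 → f x ≤ 0 := by
    intro x hgx
    have hη0 : η x ≤ 0 := QL_nonpos_imp hQ hQe hgx
    have habs : |η x| ≤ ε := by
      rw [abs_le]
      exact ⟨(hηr x).1, by linarith⟩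
    have : Q (η x) ≤ Q ε := by
      apply Q_abs_mono hQc hQe
      rw [abs_of_pos hε]; exact habs
    simp only [hfdef]
    linarith
  -- value of the constant integral
  have hconst : ∀ s t : ℝ, s ≤ t → (∫ _x in Icc s t, Q ε) = Q ε * (t - s) := by
    intro s t hst
    rw [setIntegral_const]
    rw [Real.volume_real_Icc_of_le hst]
    rw [smul_eq_mul]
    ring
  have hfint : ∀ s t : ℝ, (∫ x in Icc s t, f x) =
      (∫ x in Icc s t, Q (η x)) - Q ε * (t - s) ∨ ¬ s ≤ t := by
    intro s t
    by_cases hst : s ≤ t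
    · left
      have h0 : (fun x => Q (η x)) = fun x => Q (η x - 0) := by
        funext x; rw [sub_zero]
      rw [hfdef]
      rw [integral_sub (by rw [h0]; exact hQd_int 0 _ (hIccfin s t))
        (integrableOn_const (C := Q ε) measure_Icc_lt_top.ne)]
      rw [hconst s t hst]
    · right; exact hst
  -- hF
  have hF : 0 < ∫ x in Icc a b, f x := by
    rcases hfint a b with h | h
    · rw [h]; linarith
    · exact absurd hab.le h
  -- hG : ∫ g ≤ 0 via monotone slopes
  have hG : (∫ x in Icc a b, g x) ≤ 0 := by
    set sn : ℕ → ℝ → ℝ := fun n x => (Q (η x) - Q (η x - 1/(n+1))) / (1/(n+1)) with hsndef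
    have hdn : ∀ n : ℕ, (0:ℝ) < 1/(n+1) := by
      intro n; positivity
    have hdn1 : ∀ n : ℕ, (1:ℝ)/(n+1) ≤ 1 := by
      intro n
      rw [div_le_one (by positivity)]
      have : (0:ℝ) ≤ (n:ℝ) := Nat.cast_nonneg n
      linarith
    have hsn_meas : ∀ n, Measurable (sn n) := by
      intro n
      apply Measurable.div_const
      exact (hQcont.measurable.comp hη).sub (hQd_meas _)
    have hsn_le_g : ∀ n x, sn n x ≤ g x := fun n x => lslope_le_QL hQc (hdn n)
    have hsn_lb : ∀ n x, (Q (η x) - Q (η x - 1)) / 1 ≤ sn n x :=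
      fun n x => lslope_mono_h hQc (hdn n) (hdn1 n)
    have hsn_bdd : ∀ n x, ‖sn n x‖ ≤ Q (w + 1) + Cg := by
      intro n x
      rw [Real.norm_eq_abs, abs_le]
      constructor
      · have h1 := hsn_lb n x
        have h2 : Q (η x - 1) ≤ Q (w + 1) := by
          have := hQd_bdd 1 x
          rwa [abs_of_nonneg (hQ0 _), abs_one] at this
        have h3 : 0 ≤ Q (η x) := hQ0 _
        have h4 : (Q (η x) - Q (η x - 1)) / 1 = Q (η x) - Q (η x - 1) := by ring
        rw [h4] at h1
        have h5 : 0 ≤ Cg := le_trans (abs_nonneg _) (hgb 0)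
        linarith
      · have h1 := hsn_le_g n x
        have h2 : g x ≤ Cg := le_trans (le_abs_self _) (hgb x)
        have h3 : 0 ≤ Q (w + 1) := hQ0 _
        linarith
    have hsn_int : ∀ n, (∫ x in Icc a b, sn n x) ≤ 0 := by
      intro n
      have hdiff : (∫ x in Icc a b, (Q (η x) - Q (η x - 1/(n+1)))) ≤ 0 := by
        rw [integral_sub (by
            have h0 : (fun x => Q (η x)) = fun x => Q (η x - 0) := by
              funext x; rw [sub_zero]
            rw [h0]; exact hQd_int 0 _ (hIccfin a b))
          (hQd_int _ _ (hIccfin a b))]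
        linarith [hmono (1/(n+1)) (hdn n)]
      have : (∫ x in Icc a b, sn n x) =
          (∫ x in Icc a b, (Q (η x) - Q (η x - 1/(n+1)))) / (1/(n+1)) := by
        rw [hsndef]
        exact integral_div _ _
      rw [this]
      exact div_nonpos_of_nonpos_of_nonneg hdiff (hdn n).le
    have hsn_tendsto : ∀ x, Tendsto (fun n => sn n x) atTop (nhds (g x)) := by
      intro x
      have hmono_n : Monotone (fun n => sn n x) := by
        intro m n hmn
        apply lslope_mono_h hQc (hdn n)
        apply div_le_div_of_nonneg_left one_pos.le (by positivity)
        have : (m:ℝ) ≤ (n:ℝ) := Nat.cast_le.2 hmn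
        linarith
      have hbdd_n : BddAbove (range (fun n => sn n x)) := by
        refine ⟨g x, ?_⟩
        rintro z ⟨n, rfl⟩
        exact hsn_le_g n x
      have htend := tendsto_atTop_ciSup hmono_n hbdd_n
      have hsup : (⨆ n, sn n x) = g x := by
        apply le_antisymm
        · exact ciSup_le (fun n => hsn_le_g n x)
        · show sSup ((fun h : ℝ => (Q (η x) - Q (η x - h)) / h) '' Ioi 0) ≤ ⨆ n, sn n x
          have hne : ((fun h : ℝ => (Q (η x) - Q (η x - h)) / h) '' Ioi 0).Nonempty :=
            ⟨_, ⟨1, mem_Ioi.2 one_pos, rfl⟩⟩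
          apply csSup_le hne
          rintro z ⟨h, hh, rfl⟩
          have hh' : (0:ℝ) < h := hh
          obtain ⟨n, hn⟩ := exists_nat_one_div_lt hh'
          have h1 : (Q (η x) - Q (η x - h)) / h ≤ sn n x := by
            apply lslope_mono_h hQc (hdn n)
            exact (le_of_lt (by exact_mod_cast hn))
          exact le_trans h1 (le_ciSup hbdd_n n)
      rw [← hsup]
      exact htend
    have hdct := MeasureTheory.tendsto_integral_of_dominated_convergence
      (μ := volume.restrict (Icc a b)) (bound := fun _ => Q (w + 1) + Cg)
      (F := sn) (f := g)
      (fun n => (hsn_meas n).aestronglyMeasurable.restrict)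
      (integrableOn_const measure_Icc_lt_top.ne)
      (fun n => ae_of_all _ (fun x => hsn_bdd n x))
      (ae_of_all _ hsn_tendsto)
    exact le_of_tendsto hdct (Eventually.of_forall hsn_int)
  -- hng
  have hng : ∀ s t, a ≤ s → s < t → t ≤ b → (∫ x in Icc s t, g x) = 0 →
      (∫ x in Icc s t, f x) < 0 := by
    intro s t h1 h2 h3 hg0
    obtain ⟨d, hd⟩ := hsub s t h1 h2 h3
    have hsubgrad : ∀ x, Q (η x) - d * g x ≤ Q (η x - d) :=
      fun x => QL_subgradient hQc (η x) d
    have hint1 : (∫ x in Icc s t, (Q (η x) - d * g x)) ≤ ∫ x in Icc s t, Q (η x - d) := by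
      apply setIntegral_mono_on
      · refine Integrable.sub ?_ ?_
        · have h0 : (fun x => Q (η x)) = fun x => Q (η x - 0) := by
            funext x; rw [sub_zero]
          rw [h0]; exact hQd_int 0 _ (hIccfin s t)
        · exact (integrableOn_of_bdd hgm hgb' (hIccfin s t)).const_mul d
      · exact hQd_int d _ (hIccfin s t)
      · exact measurableSet_Icc
      · exact fun x _ => hsubgrad x
    have hint2 : (∫ x in Icc s t, (Q (η x) - d * g x)) = ∫ x in Icc s t, Q (η x) := by
      rw [integral_sub (by
          have h0 : (fun x => Q (η x)) = fun x => Q (η x - 0) := by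
            funext x; rw [sub_zero]
          rw [h0]; exact hQd_int 0 _ (hIccfin s t))
        ((integrableOn_of_bdd hgm hgb' (hIccfin s t)).const_mul d)]
      rw [integral_const_mul, hg0, mul_zero, sub_zero]
    rcases hfint s t with h | h
    · rw [h]
      rw [hint2] at hint1
      linarith
    · exact absurd h2.le h
  exact lemmaX hab hfm hgm hfb' hgb' himp hF hG hng

end Stmt10Aux

open Stmt10Aux in
theorem stmt10' (Q : ℝ → ℝ) (hQ : StrictConvexOn ℝ univ Q) (hQe : ∀ t, Q (-t) = Q t)
    (hQ0 : ∀ t, 0 ≤ Q t) (A B ε : ℝ) (hAB : A ≤ B) (hε : 0 < ε)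
    (φ : ℝ → ℝ) (hφ : Measurable φ) (a b : ℝ) (hab : a < b)
    (hrange : ∀ x ∈ Icc a b, φ x ∈ Icc A B)
    (hW : W Q φ (Icc a b) < ENNReal.ofReal (Q ε)) :
    (A + ε ≤ CC Q φ (Icc a b) ∨ Vc Q φ (Icc a b) (A + ε) ≤ ENNReal.ofReal (Q ε))
    ∧ (CC Q φ (Icc a b) ≤ B - ε ∨ Vc Q φ (Icc a b) (B - ε) ≤ ENNReal.ofReal (Q ε)) := by
  classical
  set q : ℝ := Q ε with hqdef
  have hq0 : 0 ≤ q := hQ0 ε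
  have hQc : ConvexOn ℝ univ Q := hQ.convexOn
  have hQcont : Continuous Q := Q_continuous hQc
  have hba : (0:ℝ) < b - a := by linarith
  -- pointwise bound on J
  have hbd : ∀ c : ℝ, ∀ x ∈ Icc a b, |Q (φ x - c)| ≤ Q (|A - c| + (B - A)) := by
    intro c x hx
    rw [abs_of_nonneg (hQ0 _)]
    apply Q_abs_mono hQc hQe
    rw [abs_of_nonneg (by have := abs_nonneg (A - c); linarith : (0:ℝ) ≤ |A - c| + (B - A))]
    have h1 := (hrange x hx).1
    have h2 := (hrange x hx).2
    rw [abs_le]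
    constructor
    · have h3 : -(|A - c|) ≤ A - c := neg_abs_le _
      have h4 : (0:ℝ) ≤ B - A := by linarith
      linarith
    · have h3 : A - c ≤ |A - c| := le_abs_self _
      linarith
  have hQφm : ∀ c : ℝ, Measurable (fun x => Q (φ x - c)) :=
    fun c => hQcont.measurable.comp (hφ.sub_const c)
  have hIOn : ∀ (c s t : ℝ), a ≤ s → t ≤ b →
      IntegrableOn (fun x => Q (φ x - c)) (Icc s t) volume := by
    intro c s t hs ht
    refine Integrable.mono' (g := fun _ => Q (|A - c| + (B - A)))
      (integrableOn_const measure_Icc_lt_top.ne)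
      ((hQφm c).aestronglyMeasurable.restrict) ?_
    rw [ae_restrict_iff' measurableSet_Icc]
    exact ae_of_all _ (fun x hx => by
      simpa [Real.norm_eq_abs] using hbd c x ⟨le_trans hs hx.1, le_trans hx.2 ht⟩)
  set I : ℝ → ℝ := fun c => ∫ x in Icc a b, Q (φ x - c) with hIdef
  have hI0 : ∀ (c s t : ℝ), 0 ≤ ∫ x in Icc s t, Q (φ x - c) :=
    fun c s t => setIntegral_nonneg measurableSet_Icc (fun x _ => hQ0 _)
  -- conversion
  have hVcI : ∀ (c s t : ℝ), a ≤ s → s ≤ t → t ≤ b →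
      Vc Q φ (Icc s t) c =
        ENNReal.ofReal (∫ x in Icc s t, Q (φ x - c)) / ENNReal.ofReal (t - s) := by
    intro c s t hs hst ht
    rw [Vc, avg, Real.volume_Icc]
    rw [← MeasureTheory.ofReal_integral_eq_lintegral_ofReal (hIOn c s t hs ht)
      (ae_of_all _ (fun x => hQ0 _))]
    rw [ENNReal.div_eq_inv_mul]
  have hDne : ∀ s t : ℝ, s < t → (ENNReal.ofReal (t - s)) ≠ 0 := by
    intro s t hst
    simp only [ne_eq, ENNReal.ofReal_eq_zero, not_le]
    linarith
  have hVc_le_iff : ∀ (c s t r : ℝ), 0 ≤ r → a ≤ s → s < t → t ≤ b →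
      (Vc Q φ (Icc s t) c ≤ ENNReal.ofReal r ↔
        (∫ x in Icc s t, Q (φ x - c)) ≤ r * (t - s)) := by
    intro c s t r hr hs hst ht
    rw [hVcI c s t hs hst.le ht]
    rw [ENNReal.div_le_iff_le_mul (Or.inl (hDne s t hst)) (Or.inl ENNReal.ofReal_ne_top)]
    rw [← ENNReal.ofReal_mul hr]
    exact ENNReal.ofReal_le_ofReal_iff (by nlinarith)
  -- subintervals have small V
  have hVlt : ∀ s t : ℝ, a ≤ s → s < t → t ≤ b →
      ∃ c, (∫ x in Icc s t, Q (φ x - c)) < q * (t - s) := by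
    intro s t hs hst ht
    have hVW : V Q φ (Icc s t) ≤ W Q φ (Icc a b) := by
      exact le_iSup_of_le s (le_iSup_of_le t
        (le_iSup_of_le (Icc_subset_Icc hs ht) le_rfl))
    have h2 : V Q φ (Icc s t) < ENNReal.ofReal q := lt_of_le_of_lt hVW hW
    rw [V, iInf_lt_iff] at h2
    obtain ⟨c, hc⟩ := h2
    refine ⟨c, ?_⟩
    rw [hVcI c s t hs hst.le ht] at hc
    rw [ENNReal.div_lt_iff (Or.inl (hDne s t hst)) (Or.inl ENNReal.ofReal_ne_top)] at hc
    rw [← ENNReal.ofReal_mul hq0] at hc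
    exact (ENNReal.ofReal_lt_ofReal_iff_of_nonneg (hI0 c s t)).1 hc
  -- continuity of I on [A, B]
  have hIcont : ContinuousOn I (Icc A B) := by
    set lo : ℝ := A - B with hlo
    set hi : ℝ := B - A with hhi
    set K : ℝ := max (|Q lo - Q (lo - 1)|) (|Q (hi + 1) - Q hi|) with hKdef
    have hK0 : 0 ≤ K := le_trans (abs_nonneg _) (le_max_left _ _)
    have hlip : ∀ c ∈ Icc A B, ∀ c' ∈ Icc A B,
        |I c - I c'| ≤ (K * (b - a)) * |c - c'| := by
      intro c hc c' hc'
      have hpt : ∀ x ∈ Icc a b, |Q (φ x - c) - Q (φ x - c')| ≤ K * |c - c'| := by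
        intro x hx
        have h1 : φ x - c ∈ Icc lo hi :=
          ⟨by have := (hrange x hx).1; simp only [hlo]; linarith [hc.2],
           by have := (hrange x hx).2; simp only [hhi]; linarith [hc.1]⟩
        have h2 : φ x - c' ∈ Icc lo hi :=
          ⟨by have := (hrange x hx).1; simp only [hlo]; linarith [hc'.2],
           by have := (hrange x hx).2; simp only [hhi]; linarith [hc'.1]⟩
        have h3 := Q_lip hQc lo hi h1 h2
        have h4 : φ x - c - (φ x - c') = c' - c := by ring
        rw [h4] at h3
        rw [abs_sub_comm c c']
        exact h3
      have hsub : I c - I c' = ∫ x in Icc a b, (Q (φ x - c) - Q (φ x - c')) := by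
        rw [hIdef]
        exact (integral_sub (hIOn c a b le_rfl le_rfl) (hIOn c' a b le_rfl le_rfl)).symm
      rw [hsub]
      have hnorm := norm_setIntegral_le_of_norm_le_const
        (μ := volume) (s := Icc a b) (f := fun x => Q (φ x - c) - Q (φ x - c'))
        measure_Icc_lt_top (C := K * |c - c'|)
        (fun x hx => by rw [Real.norm_eq_abs]; exact hpt x hx)
      rw [Real.norm_eq_abs] at hnorm
      rw [Real.volume_real_Icc_of_le hab.le] at hnorm
      calc |∫ x in Icc a b, (Q (φ x - c) - Q (φ x - c'))| ≤ K * |c - c'| * (b - a) := hnorm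
        _ = K * (b - a) * |c - c'| := by ring
    have hlip' : LipschitzOnWith (Real.toNNReal (K * (b - a))) I (Icc A B) := by
      apply LipschitzOnWith.of_dist_le_mul
      intro x hx y hy
      rw [Real.dist_eq, Real.dist_eq]
      rw [Real.coe_toNNReal _ (by positivity)]
      exact hlip x hx y hy
    exact hlip'.continuousOn
  -- minimizer of I
  obtain ⟨c₀, hc₀mem, hc₀min⟩ :=
    isCompact_Icc.exists_isMinOn (nonempty_Icc.2 hAB) hIcont
  have hclamp : ∀ c, ∃ c' ∈ Icc A B, I c' ≤ I c := by
    intro c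
    rcases lt_trichotomy c A with h | h | h
    · refine ⟨A, left_mem_Icc.2 hAB, ?_⟩
      apply setIntegral_mono_on (hIOn A a b le_rfl le_rfl) (hIOn c a b le_rfl le_rfl)
        measurableSet_Icc
      intro x hx
      apply Q_abs_mono hQc hQe
      have h1 := (hrange x hx).1
      rw [abs_of_nonneg (by linarith : (0:ℝ) ≤ φ x - A),
        abs_of_nonneg (by linarith : (0:ℝ) ≤ φ x - c)]
      linarith
    · exact ⟨A, left_mem_Icc.2 hAB, by rw [h]⟩
    · rcases le_or_gt c B with hB | hB
      · exact ⟨c, ⟨h.le, hB⟩, le_rfl⟩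
      · refine ⟨B, right_mem_Icc.2 hAB, ?_⟩
        apply setIntegral_mono_on (hIOn B a b le_rfl le_rfl) (hIOn c a b le_rfl le_rfl)
          measurableSet_Icc
        intro x hx
        apply Q_abs_mono hQc hQe
        have h2 := (hrange x hx).2
        rw [abs_of_nonpos (by linarith : φ x - B ≤ 0),
          abs_of_nonpos (by linarith : φ x - c ≤ 0)]
        linarith
  have hmin : ∀ c, I c₀ ≤ I c := by
    intro c
    obtain ⟨c', hc', hle⟩ := hclamp c
    exact le_trans (hc₀min hc') hle
  -- CC is a minimizer
  have hPc₀ : ∀ c', Vc Q φ (Icc a b) c₀ ≤ Vc Q φ (Icc a b) c' := by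
    intro c'
    rw [hVcI c₀ a b le_rfl hab.le le_rfl, hVcI c' a b le_rfl hab.le le_rfl]
    exact ENNReal.div_le_div_right (ENNReal.ofReal_le_ofReal (hmin c')) _
  have hCCspec : ∀ c', Vc Q φ (Icc a b) (CC Q φ (Icc a b)) ≤ Vc Q φ (Icc a b) c' :=
    Classical.epsilon_spec
      (p := fun c => ∀ c', Vc Q φ (Icc a b) c ≤ Vc Q φ (Icc a b) c') ⟨c₀, hPc₀⟩
  have hCCI : ∀ c, I (CC Q φ (Icc a b)) ≤ I c := by
    intro c
    have h := hCCspec c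
    rw [hVcI _ a b le_rfl hab.le le_rfl, hVcI c a b le_rfl hab.le le_rfl] at h
    rw [ENNReal.div_le_iff_le_mul (Or.inl (hDne a b hab)) (Or.inl ENNReal.ofReal_ne_top)] at h
    rw [ENNReal.div_mul_cancel (hDne a b hab) ENNReal.ofReal_ne_top] at h
    exact (ENNReal.ofReal_le_ofReal_iff (hI0 c a b)).1 h
  -- convexity of I
  have hIconv : ∀ c₁ c₂ θ : ℝ, 0 ≤ θ → θ ≤ 1 →
      I (θ*c₁ + (1-θ)*c₂) ≤ θ * I c₁ + (1-θ) * I c₂ := by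
    intro c₁ c₂ θ h0 h1
    have hpt : ∀ x ∈ Icc a b, Q (φ x - (θ*c₁+(1-θ)*c₂)) ≤
        θ * Q (φ x - c₁) + (1-θ) * Q (φ x - c₂) := by
      intro x _
      have h2 := hQc.2 (mem_univ (φ x - c₁)) (mem_univ (φ x - c₂)) h0 (by linarith)
        (by ring : θ + (1 - θ) = 1)
      have he : θ • (φ x - c₁) + (1-θ) • (φ x - c₂) = φ x - (θ*c₁+(1-θ)*c₂) := by
        simp only [smul_eq_mul]; ring
      rw [he] at h2
      simpa using h2
    calc I (θ*c₁+(1-θ)*c₂) ≤ ∫ x in Icc a b, (θ * Q (φ x - c₁) + (1-θ) * Q (φ x - c₂)) := by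
          apply setIntegral_mono_on (hIOn _ a b le_rfl le_rfl) ?_ measurableSet_Icc hpt
          exact Integrable.add ((hIOn c₁ a b le_rfl le_rfl).const_mul θ)
            ((hIOn c₂ a b le_rfl le_rfl).const_mul (1-θ))
      _ = θ * I c₁ + (1-θ) * I c₂ := by
          rw [integral_add ((hIOn c₁ a b le_rfl le_rfl).const_mul θ)
            ((hIOn c₂ a b le_rfl le_rfl).const_mul (1-θ)),
            integral_const_mul, integral_const_mul]
  -- monotonicity away from a global minimizer
  have hmidR : ∀ cm u v : ℝ, (∀ c, I cm ≤ I c) → cm ≤ u → u ≤ v → I u ≤ I v := by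
    intro cm u v hm h1 h2
    rcases eq_or_lt_of_le (le_trans h1 h2 : cm ≤ v) with h | h
    · have : u = v := le_antisymm h2 (by rw [← h]; exact h1)
      rw [this]
    · set θ : ℝ := (v - u)/(v - cm) with hθdef
      have hvcm : (0:ℝ) < v - cm := by linarith
      have hθ0 : 0 ≤ θ := div_nonneg (by linarith) hvcm.le
      have hθ1 : θ ≤ 1 := (div_le_one hvcm).2 (by linarith)
      have he : u = θ*cm + (1-θ)*v := by
        rw [hθdef]; field_simp; ring
      calc I u = I (θ*cm + (1-θ)*v) := by rw [← he]
        _ ≤ θ * I cm + (1-θ) * I v := hIconv _ _ _ hθ0 hθ1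
        _ ≤ θ * I v + (1-θ) * I v := by nlinarith [hm v]
        _ = I v := by ring
  have hmidL : ∀ cm u v : ℝ, (∀ c, I cm ≤ I c) → u ≤ cm → v ≤ u → I u ≤ I v := by
    intro cm u v hm h1 h2
    rcases eq_or_lt_of_le (le_trans h2 h1 : v ≤ cm) with h | h
    · have : u = v := le_antisymm (by rw [h]; exact h1) h2
      rw [this]
    · set θ : ℝ := (u - v)/(cm - v) with hθdef
      have hvcm : (0:ℝ) < cm - v := by linarith
      have hθ0 : 0 ≤ θ := div_nonneg (by linarith) hvcm.le
      have hθ1 : θ ≤ 1 := (div_le_one hvcm).2 (by linarith)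
      have he : u = θ*cm + (1-θ)*v := by
        rw [hθdef]; field_simp; ring
      calc I u = I (θ*cm + (1-θ)*v) := by rw [← he]
        _ ≤ θ * I cm + (1-θ) * I v := hIconv _ _ _ hθ0 hθ1
        _ ≤ θ * I v + (1-θ) * I v := by nlinarith [hm v]
        _ = I v := by ring
  set M : ℝ := B - A - ε with hMdef
  have hMε : -ε ≤ M := by simp only [hMdef]; linarith
  constructor
  · -- side A
    by_cases hVA : Vc Q φ (Icc a b) (A + ε) ≤ ENNReal.ofReal q
    · exact Or.inr hVA
    left
    by_contra hCClt
    push_neg at hCClt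
    have hIA : q * (b - a) < I (A + ε) := by
      rw [hVc_le_iff (A+ε) a b q hq0 le_rfl hab le_rfl] at hVA
      push_neg at hVA
      exact hVA
    set η : ℝ → ℝ := fun x => max (-ε) (min M (φ x - (A + ε))) with hηdef
    have hηm : Measurable η :=
      measurable_const.max (measurable_const.min (hφ.sub_const _))
    have hηr : ∀ x, η x ∈ Icc (-ε) M := by
      intro x
      exact ⟨le_max_left _ _, max_le hMε (min_le_left _ _)⟩
    have hηeq : ∀ x ∈ Icc a b, η x = φ x - (A + ε) := by
      intro x hx
      have h1 : φ x - (A+ε) ≤ M := by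
        have := (hrange x hx).2; simp only [hMdef]; linarith
      have h2 : -ε ≤ φ x - (A+ε) := by
        have := (hrange x hx).1; linarith
      rw [hηdef]
      simp only
      rw [min_eq_right h1, max_eq_right h2]
    have hηQ : ∀ (d s t : ℝ), a ≤ s → t ≤ b →
        (∫ x in Icc s t, Q (η x - d)) = ∫ x in Icc s t, Q (φ x - (A + ε + d)) := by
      intro d s t hs ht
      apply setIntegral_congr_fun measurableSet_Icc
      intro x hx
      show Q (η x - d) = Q (φ x - (A + ε + d))
      rw [hηeq x ⟨le_trans hs hx.1, le_trans hx.2 ht⟩]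
      congr 1
      ring
    have hηQ0 : (∫ x in Icc a b, Q (η x)) = I (A + ε) := by
      have h := hηQ 0 a b le_rfl le_rfl
      simp only [sub_zero, add_zero] at h
      exact h
    apply mainLemma Q hQ hQe hQ0 ε M hε η hηm hηr a b hab
    · intro δ hδ
      rw [hηQ0, hηQ δ a b le_rfl le_rfl]
      exact hmidR (CC Q φ (Icc a b)) (A+ε) (A+ε+δ) hCCI hCClt.le (by linarith)
    · rw [hηQ0]; exact hIA
    · intro s t hs hst ht
      obtain ⟨c, hc⟩ := hVlt s t hs hst ht
      refine ⟨c - (A + ε), ?_⟩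
      rw [hηQ (c - (A+ε)) s t hs ht]
      rw [show A + ε + (c - (A + ε)) = c by ring]
      exact hc
  · -- side B
    by_cases hVB : Vc Q φ (Icc a b) (B - ε) ≤ ENNReal.ofReal q
    · exact Or.inr hVB
    left
    by_contra hCCgt
    push_neg at hCCgt
    have hIB : q * (b - a) < I (B - ε) := by
      rw [hVc_le_iff (B-ε) a b q hq0 le_rfl hab le_rfl] at hVB
      push_neg at hVB
      exact hVB
    set η : ℝ → ℝ := fun x => max (-ε) (min M ((B - ε) - φ x)) with hηdef
    have hηm : Measurable η :=
      measurable_const.max (measurable_const.min ((measurable_const.sub hφ)))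
    have hηr : ∀ x, η x ∈ Icc (-ε) M := by
      intro x
      exact ⟨le_max_left _ _, max_le hMε (min_le_left _ _)⟩
    have hηeq : ∀ x ∈ Icc a b, η x = (B - ε) - φ x := by
      intro x hx
      have h1 : (B - ε) - φ x ≤ M := by
        have := (hrange x hx).1; simp only [hMdef]; linarith
      have h2 : -ε ≤ (B - ε) - φ x := by
        have := (hrange x hx).2; linarith
      rw [hηdef]
      simp only
      rw [min_eq_right h1, max_eq_right h2]
    have hηQ : ∀ (d s t : ℝ), a ≤ s → t ≤ b →
        (∫ x in Icc s t, Q (η x - d)) = ∫ x in Icc s t, Q (φ x - (B - ε - d)) := by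
      intro d s t hs ht
      apply setIntegral_congr_fun measurableSet_Icc
      intro x hx
      show Q (η x - d) = Q (φ x - (B - ε - d))
      rw [hηeq x ⟨le_trans hs hx.1, le_trans hx.2 ht⟩]
      rw [show (B - ε) - φ x - d = -(φ x - (B - ε - d)) by ring]
      rw [hQe]
    have hηQ0 : (∫ x in Icc a b, Q (η x)) = I (B - ε) := by
      have h := hηQ 0 a b le_rfl le_rfl
      simp only [sub_zero] at h
      exact h
    apply mainLemma Q hQ hQe hQ0 ε M hε η hηm hηr a b hab
    · intro δ hδ
      rw [hηQ0, hηQ δ a b le_rfl le_rfl]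
      exact hmidL (CC Q φ (Icc a b)) (B-ε) (B-ε-δ) hCCI hCCgt.le (by linarith)
    · rw [hηQ0]; exact hIB
    · intro s t hs hst ht
      obtain ⟨c, hc⟩ := hVlt s t hs hst ht
      refine ⟨(B - ε) - c, ?_⟩
      rw [hηQ ((B - ε) - c) s t hs ht]
      rw [show B - ε - (B - ε - c) = c by ring]
      exact hc


theorem stmt10 (Q : ℝ → ℝ) (hQ : StrictConvexOn ℝ univ Q) (hQe : ∀ t, Q (-t) = Q t)
    (hQ0 : ∀ t, 0 ≤ Q t) (A B ε : ℝ) (hAB : A ≤ B) (hε : 0 < ε)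
    (φ : ℝ → ℝ) (hφ : Measurable φ) (a b : ℝ) (hab : a < b)
    (hrange : ∀ x ∈ Icc a b, φ x ∈ Icc A B)
    (hW : W Q φ (Icc a b) < ENNReal.ofReal (Q ε)) :
    (A + ε ≤ CC Q φ (Icc a b) ∨ Vc Q φ (Icc a b) (A + ε) ≤ ENNReal.ofReal (Q ε))
    ∧ (CC Q φ (Icc a b) ≤ B - ε ∨ Vc Q φ (Icc a b) (B - ε) ≤ ENNReal.ofReal (Q ε)) := by
  exact stmt10' Q hQ hQe hQ0 A B ε hAB hε φ hφ a b hab hrange hW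
end
end

section
/- Let Q : ℝ → [0,∞) be convex and even, and let A ≤ B. For any measurable φ on an interval J, the two-sided truncation Tr_{A,B}∘φ = min(B, max(A, φ)) satisfies W(Tr_{A,B}∘φ, J) ≤ W(φ, J). -/
open MeasureTheory Set Filter Topology
open scoped ENNReal

noncomputable section

lemma evenConvex_mono (Q : ℝ → ℝ) (hQ : ConvexOn ℝ univ Q) (hQe : ∀ t, Q (-t) = Q t)
    {u v : ℝ} (h : |u| ≤ |v|) : Q u ≤ Q v := by
  have habs : ∀ t : ℝ, Q |t| = Q t := by
    intro t
    rcases abs_choice t with h | h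
    · rw [h]
    · rw [h, hQe]
  rw [← habs u, ← habs v]
  set x := |u| with hx
  set y := |v| with hy
  have hx0 : 0 ≤ x := abs_nonneg u
  have hxy : x ≤ y := h
  rcases eq_or_lt_of_le (hx0.trans hxy) with hy0 | hy0
  · have : x = 0 := le_antisymm (hxy.trans hy0.symm.le) hx0
    rw [this, ← hy0]
  · have ha : (0:ℝ) ≤ (y + x) / (2 * y) := by positivity
    have hb : (0:ℝ) ≤ (y - x) / (2 * y) := by
      apply div_nonneg (by linarith) (by linarith)
    have hab : (y + x) / (2 * y) + (y - x) / (2 * y) = 1 := by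
      field_simp; ring
    have := hQ.2 (mem_univ y) (mem_univ (-y)) ha hb hab
    have hcomb : ((y + x) / (2 * y)) • y + ((y - x) / (2 * y)) • (-y) = x := by
      rw [smul_eq_mul, smul_eq_mul, div_mul_eq_mul_div, div_mul_eq_mul_div, ← add_div,
        div_eq_iff (mul_pos two_pos hy0).ne']; ring
    rw [hcomb, hQe] at this
    calc Q x ≤ (y + x) / (2 * y) * Q y + (y - x) / (2 * y) * Q y := this
      _ = Q y := by rw [← add_mul, hab, one_mul]

theorem stmt12 (Q : ℝ → ℝ) (hQ : ConvexOn ℝ univ Q) (hQe : ∀ t, Q (-t) = Q t)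
    (hQ0 : ∀ t, 0 ≤ Q t) (A B : ℝ) (hAB : A ≤ B)
    (φ : ℝ → ℝ) (hφ : Measurable φ) (a b : ℝ) :
    W Q (fun x => min B (max A (φ x))) (Icc a b) ≤ W Q φ (Icc a b) := by
  apply iSup_mono; intro l
  apply iSup_mono; intro r
  apply iSup_mono'; intro hsub
  refine ⟨hsub, ?_⟩
  apply le_iInf; intro c
  refine iInf_le_of_le (min B (max A c)) ?_
  apply mul_le_mul_right
  apply lintegral_mono; intro x
  apply ENNReal.ofReal_le_ofReal
  apply evenConvex_mono Q hQ hQe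
  calc |min B (max A (φ x)) - min B (max A c)|
      ≤ max |B - B| |max A (φ x) - max A c| := abs_min_sub_min_le_max _ _ _ _
    _ = |max (φ x) A - max c A| := by rw [sub_self, abs_zero, max_comm A, max_comm A]; simp
    _ ≤ |φ x - c| := abs_max_sub_max_le_abs _ _ _
end
end
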